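/- arXiv:2005.02687 — 3 statements merged into one kernel-verified Lean document; each statement's English description precedes it below -/
import Mathlib

section
/- The function t ↦ (t² + β)^{p/2} on ℝ is strictly convex for every β > 0 and 1 ≤ p ≤ 2, and consequently Ψ_p(x) = (1/p) ∑_i (x_i² + β)^{p/2} is strictly convex on ℝⁿ. -/
lemma scalar_strictConvex (β p : ℝ) (hβ : 0 < β) (hp1 : 1 ≤ p) (hp2 : p ≤ 2) :
    StrictConvexOn ℝ Set.univ (fun t : ℝ => (t ^ 2 + β) ^ (p / 2)) := by
  set q := p / 2 with hq
  have hq1 : (1:ℝ)/2 ≤ q := by rw [hq]; linarith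
  have hq2 : q ≤ 1 := by rw [hq]; linarith
  have hpos : ∀ t : ℝ, 0 < t ^ 2 + β := fun t => by positivity
  have hd1 : ∀ t : ℝ, HasDerivAt (fun t : ℝ => (t ^ 2 + β) ^ q)
      (2 * t * q * (t ^ 2 + β) ^ (q - 1)) t := by
    intro t
    have h1 : HasDerivAt (fun t : ℝ => t ^ 2 + β) (2 * t) t := by
      simpa using ((hasDerivAt_pow 2 t).add_const β)
    exact h1.rpow_const (Or.inl (hpos t).ne')
  have hd2 : ∀ t : ℝ, HasDerivAt (fun t : ℝ => 2 * t * q * (t ^ 2 + β) ^ (q - 1))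
      (2 * q * (t ^ 2 + β) ^ (q - 1)
        + 2 * t * q * (2 * t * (q - 1) * (t ^ 2 + β) ^ (q - 1 - 1))) t := by
    intro t
    have h1 : HasDerivAt (fun t : ℝ => t ^ 2 + β) (2 * t) t := by
      simpa using ((hasDerivAt_pow 2 t).add_const β)
    have h2 : HasDerivAt (fun t : ℝ => (t ^ 2 + β) ^ (q - 1))
        (2 * t * (q - 1) * (t ^ 2 + β) ^ (q - 1 - 1)) t :=
      h1.rpow_const (Or.inl (hpos t).ne')
    have h3 : HasDerivAt (fun t : ℝ => 2 * t * q) (2 * q) t := by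
      have := (hasDerivAt_id t).const_mul (2 : ℝ)
      simpa [mul_comm, mul_assoc, mul_left_comm] using this.mul_const q
    exact h3.mul h2
  have hderiv : deriv (fun t : ℝ => (t ^ 2 + β) ^ q)
      = fun t : ℝ => 2 * t * q * (t ^ 2 + β) ^ (q - 1) := by
    funext t; exact (hd1 t).deriv
  apply strictConvexOn_of_deriv2_pos convex_univ
  · exact fun t _ => ((hd1 t).differentiableAt.continuousAt).continuousWithinAt
  · intro t _
    have : deriv^[2] (fun t : ℝ => (t ^ 2 + β) ^ q) t
        = 2 * q * (t ^ 2 + β) ^ (q - 1)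
          + 2 * t * q * (2 * t * (q - 1) * (t ^ 2 + β) ^ (q - 1 - 1)) := by
      simp only [Function.iterate_succ, Function.iterate_zero, Function.comp_apply, id]
      rw [hderiv]
      exact (hd2 t).deriv
    rw [this]
    have hA := hpos t
    have h2pos : (0:ℝ) < (t ^ 2 + β) ^ (q - 1 - 1) := Real.rpow_pos_of_pos hA _
    have hkey : (t ^ 2 + β) ^ (q - 1) = (t ^ 2 + β) ^ (q - 1 - 1) * (t ^ 2 + β) := by
      rw [← Real.rpow_add_one hA.ne']; ring_nf
    rw [hkey]
    have hq0 : 0 < q := by linarith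
    nlinarith [sq_nonneg t, mul_pos h2pos hβ, mul_nonneg (mul_nonneg h2pos.le (sq_nonneg t)) (by linarith : (0:ℝ) ≤ 2*q - 1)]

/-- For β > 0 and 1 ≤ p ≤ 2, the scalar function t ↦ (t² + β)^{p/2} is strictly convex
on ℝ, and consequently Ψ_p(x) = (1/p) ∑ᵢ (xᵢ² + β)^{p/2} is strictly convex on ℝⁿ. -/
theorem smooth_approx_strictConvex (n : ℕ) (β p : ℝ) (hβ : 0 < β)
    (hp1 : 1 ≤ p) (hp2 : p ≤ 2) :
    StrictConvexOn ℝ Set.univ (fun t : ℝ => (t ^ 2 + β) ^ (p / 2)) ∧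
    StrictConvexOn ℝ Set.univ
      (fun x : Fin n → ℝ => (1 / p) * ∑ i, ((x i ^ 2 + β) ^ (p / 2))) := by
  have hs := scalar_strictConvex β p hβ hp1 hp2
  refine ⟨hs, convex_univ, fun x _ y _ hxy a b ha hb hab => ?_⟩
  obtain ⟨i0, hi0⟩ := Function.ne_iff.mp hxy
  have hsum : ∑ i, ((a * x i + b * y i) ^ 2 + β) ^ (p / 2)
      < ∑ i, (a * ((x i ^ 2 + β) ^ (p / 2)) + b * ((y i ^ 2 + β) ^ (p / 2))) := by
    apply Finset.sum_lt_sum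
    · intro i _
      have := hs.convexOn.2 (Set.mem_univ (x i)) (Set.mem_univ (y i)) ha.le hb.le hab
      simpa [smul_eq_mul] using this
    · refine ⟨i0, Finset.mem_univ i0, ?_⟩
      have := hs.2 (Set.mem_univ (x i0)) (Set.mem_univ (y i0)) hi0 ha hb hab
      simpa [smul_eq_mul] using this
  have hp0 : (0:ℝ) < 1 / p := by positivity
  have := mul_lt_mul_of_pos_left hsum hp0
  simp only [smul_eq_mul, Pi.add_apply, Pi.smul_apply]
  calc (1/p) * ∑ i, ((a * x i + b * y i) ^ 2 + β) ^ (p / 2)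
      < (1/p) * ∑ i, (a * ((x i ^ 2 + β) ^ (p / 2)) + b * ((y i ^ 2 + β) ^ (p / 2))) := this
    _ = a * ((1/p) * ∑ i, ((x i ^ 2 + β) ^ (p / 2)))
        + b * ((1/p) * ∑ i, ((y i ^ 2 + β) ^ (p / 2))) := by
        rw [Finset.sum_add_distrib, ← Finset.mul_sum, ← Finset.mul_sum]; ring
end

section
/- Let V_k ∈ ℝ^{n×k} have orthonormal columns, assume the Generalized-Krylov condition diag(V_k,1) F^{(k)}(ȳ,λ) = F(V_k ȳ, λ) holds, and suppose J^{(k)}(ȳ,λ) is nonsingular. Let (Δy, Δλ) solve J^{(k)}(ȳ,λ)(Δy,Δλ)ᵀ = −F^{(k)}(ȳ,λ), and set Δ = (V_kΔy, Δλ) ∈ ℝ^{n+1}. Then the directional derivative of the merit function f(x,λ) = (1/2)‖F(x,λ)‖² at (V_kȳ, λ) along Δ equals −‖F(V_kȳ,λ)‖², so Δ is a descent direction whenever F(V_kȳ,λ) ≠ 0. -/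
open Matrix

/-- diag(V,1): the (n+1)×(k+1) block-diagonal matrix with blocks V and the scalar 1. -/
noncomputable def padMat {n k : ℕ} (V : Matrix (Fin n) (Fin k) ℝ) :
    Matrix (Fin n ⊕ Unit) (Fin k ⊕ Unit) ℝ :=
  Matrix.fromBlocks V 0 0 (1 : Matrix Unit Unit ℝ)

/-- The projected Newton step Δ = (V_kΔy, Δλ) is a descent direction for the merit
function f = ½‖F‖²: the directional derivative of f at u = (V_kȳ, λ) along Δ equals
−‖F(u)‖², hence is negative whenever F(u) ≠ 0. -/
theorem projected_newton_descent (m n k : ℕ) (A : Matrix (Fin m) (Fin n) ℝ)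
    (b : Fin m → ℝ) (σ : ℝ)
    (Ψ : (Fin n → ℝ) → ℝ) (gradΨ : (Fin n → ℝ) → Fin n → ℝ)
    (hgrad : ∀ x i, gradΨ x i = fderiv ℝ Ψ x (Pi.single i 1))
    (F : (Fin n ⊕ Unit → ℝ) → (Fin n ⊕ Unit → ℝ))
    (hF : ∀ u, F u = Sum.elim
        (fun i => u (Sum.inr ()) *
            Aᵀ.mulVec (A.mulVec (fun j => u (Sum.inl j)) - b) i +
          gradΨ (fun j => u (Sum.inl j)) i)
        (fun _ => (1 / 2) * ∑ j, (A.mulVec (fun j' => u (Sum.inl j')) j - b j) ^ 2 -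
          σ ^ 2 / 2))
    (J : (Fin n ⊕ Unit → ℝ) → Matrix (Fin n ⊕ Unit) (Fin n ⊕ Unit) ℝ)
    (hJ : ∀ u, HasFDerivAt F (LinearMap.toContinuousLinearMap ((J u).mulVecLin)) u)
    (V : Matrix (Fin n) (Fin k) ℝ) (hV : Vᵀ * V = 1)
    (ybar : Fin k → ℝ) (lam : ℝ) (u : Fin n ⊕ Unit → ℝ)
    (hu : u = (padMat V).mulVec (Sum.elim ybar fun _ => lam))
    (hKrylov : (padMat V).mulVec ((padMat V)ᵀ.mulVec (F u)) = F u)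
    (Jk : Matrix (Fin k ⊕ Unit) (Fin k ⊕ Unit) ℝ)
    (hJk : Jk = (padMat V)ᵀ * J u * padMat V)
    (hns : IsUnit Jk.det)
    (Δy : Fin k ⊕ Unit → ℝ)
    (hΔy : Jk.mulVec Δy = -((padMat V)ᵀ.mulVec (F u)))
    (Δ : Fin n ⊕ Unit → ℝ) (hΔ : Δ = (padMat V).mulVec Δy) :
    fderiv ℝ (fun w => (1 / 2) * ∑ i, (F w i) ^ 2) u Δ = -∑ i, (F u i) ^ 2 ∧
    (F u ≠ 0 → fderiv ℝ (fun w => (1 / 2) * ∑ i, (F w i) ^ 2) u Δ < 0) := by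
  classical
  set P := padMat V with hP
  set L := LinearMap.toContinuousLinearMap ((J u).mulVecLin) with hL
  -- derivative of the merit function
  have hFi : ∀ i : Fin n ⊕ Unit, HasFDerivAt (fun w => F w i)
      ((ContinuousLinearMap.proj i).comp L) u :=
    fun i => (ContinuousLinearMap.proj (R := ℝ) (φ := fun _ : Fin n ⊕ Unit => ℝ) i).hasFDerivAt.comp u (hJ u)
  have hsq : ∀ i : Fin n ⊕ Unit, HasFDerivAt (fun w => (F w i) ^ 2)
      (F u i • ((ContinuousLinearMap.proj i).comp L)
        + F u i • ((ContinuousLinearMap.proj i).comp L)) u := by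
    intro i
    have := (hFi i).fun_mul (hFi i)
    simpa [sq] using this
  have hsum : HasFDerivAt (fun w => ∑ i, (F w i) ^ 2)
      (∑ i, (F u i • ((ContinuousLinearMap.proj i).comp L)
        + F u i • ((ContinuousLinearMap.proj i).comp L))) u :=
    HasFDerivAt.fun_sum (fun i _ => hsq i)
  have hf : HasFDerivAt (fun w => (1 / 2 : ℝ) * ∑ i, (F w i) ^ 2)
      ((1 / 2 : ℝ) • ∑ i, (F u i • ((ContinuousLinearMap.proj i).comp L)
        + F u i • ((ContinuousLinearMap.proj i).comp L))) u :=
    hsum.const_mul _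
  have hval : fderiv ℝ (fun w => (1 / 2 : ℝ) * ∑ i, (F w i) ^ 2) u Δ
      = F u ⬝ᵥ (J u).mulVec Δ := by
    rw [hf.fderiv]
    simp only [ContinuousLinearMap.smul_apply, ContinuousLinearMap.coe_sum',
      Finset.sum_apply, ContinuousLinearMap.add_apply, ContinuousLinearMap.comp_apply,
      ContinuousLinearMap.proj_apply, hL, LinearMap.coe_toContinuousLinearMap',
      Matrix.mulVecLin_apply, dotProduct, smul_eq_mul, Finset.mul_sum]
    exact Finset.sum_congr rfl fun i _ => by ring
  -- adjoint identity for P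
  have adj : ∀ (x : Fin k ⊕ Unit → ℝ) (z : Fin n ⊕ Unit → ℝ),
      (P.mulVec x) ⬝ᵥ z = x ⬝ᵥ Pᵀ.mulVec z := by
    intro x z
    rw [dotProduct_comm, Matrix.dotProduct_mulVec, dotProduct_comm,
      Matrix.mulVec_transpose]
  set w : Fin k ⊕ Unit → ℝ := Pᵀ.mulVec (F u) with hwdef
  have hsumsq : ∑ i, (F u i) ^ 2 = w ⬝ᵥ w := by
    have h1 : F u ⬝ᵥ F u = w ⬝ᵥ w := by
      nth_rewrite 1 [← hKrylov]
      rw [adj, ← hwdef]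
    rw [← h1]
    simp [dotProduct, sq]
  have hkey : F u ⬝ᵥ (J u).mulVec Δ = -∑ i, (F u i) ^ 2 := by
    have h1 : F u ⬝ᵥ (J u).mulVec Δ = w ⬝ᵥ (Pᵀ * J u * P).mulVec Δy := by
      conv_lhs => rw [← hKrylov, hΔ]
      rw [adj, Matrix.mulVec_mulVec, Matrix.mulVec_mulVec, Matrix.mul_assoc]
    rw [h1, ← hJk, hΔy, dotProduct_neg, hsumsq]
  have hmain : fderiv ℝ (fun w => (1 / 2 : ℝ) * ∑ i, (F w i) ^ 2) u Δ
      = -∑ i, (F u i) ^ 2 := hval.trans hkey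
  refine ⟨hmain, fun hne => ?_⟩
  rw [hmain]
  have : ∃ i, F u i ≠ 0 := Function.ne_iff.mp hne
  obtain ⟨i, hi⟩ := this
  have hpos : 0 < ∑ i, (F u i) ^ 2 :=
    Finset.sum_pos' (fun j _ => sq_nonneg _) ⟨i, Finset.mem_univ i, by positivity⟩
  linarith
end

section
/- Let ȳ ∈ ℝᵏ satisfy ‖AV_kȳ − b‖ ≥ σ, and let (Δy, Δλ) satisfy the last row of the projected Newton system, i.e., (AV_kȳ − b)ᵀAV_kΔy = σ²/2 − (1/2)‖AV_kȳ − b‖². Then for every step length 0 < γ ≤ 1, the updated point y = ȳ + γΔy satisfies ‖AV_k y − b‖² ≥ σ² + γ²‖AV_kΔy‖², and in particular ‖AV_k y − b‖ ≥ σ. -/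
open Matrix

/-- If ‖AV_kȳ − b‖ ≥ σ and (Δy, Δλ) satisfies the last row of the projected Newton
system, then for any 0 < γ ≤ 1 the update y = ȳ + γΔy satisfies
‖AV_ky − b‖² ≥ σ² + γ²‖AV_kΔy‖², in particular ‖AV_ky − b‖ ≥ σ. -/
theorem residual_never_below_discrepancy (m n k : ℕ) (A : Matrix (Fin m) (Fin n) ℝ)
    (V : Matrix (Fin n) (Fin k) ℝ) (b : Fin m → ℝ) (σ : ℝ) (hσ : 0 < σ)
    (ybar Δy : Fin k → ℝ)
    (hres : σ ^ 2 ≤ ∑ i, ((A * V).mulVec ybar i - b i) ^ 2)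
    (hlast : ∑ i, ((A * V).mulVec ybar i - b i) * (A * V).mulVec Δy i =
      σ ^ 2 / 2 - (1 / 2) * ∑ i, ((A * V).mulVec ybar i - b i) ^ 2)
    (γ : ℝ) (hγ0 : 0 < γ) (hγ1 : γ ≤ 1) :
    σ ^ 2 + γ ^ 2 * ∑ i, ((A * V).mulVec Δy i) ^ 2 ≤
      ∑ i, ((A * V).mulVec (ybar + γ • Δy) i - b i) ^ 2 ∧
    σ ≤ Real.sqrt (∑ i, ((A * V).mulVec (ybar + γ • Δy) i - b i) ^ 2) := by
  have hexp : ∀ i, (A * V).mulVec (ybar + γ • Δy) i - b i =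
      ((A * V).mulVec ybar i - b i) + γ * (A * V).mulVec Δy i := by
    intro i
    rw [Matrix.mulVec_add, Matrix.mulVec_smul]
    simp [Pi.add_apply, Pi.smul_apply, smul_eq_mul]
    ring
  have key : ∑ i, ((A * V).mulVec (ybar + γ • Δy) i - b i) ^ 2 =
      (1 - γ) * (∑ i, ((A * V).mulVec ybar i - b i) ^ 2) + γ * σ ^ 2 +
      γ ^ 2 * ∑ i, ((A * V).mulVec Δy i) ^ 2 := by
    have : ∑ i, ((A * V).mulVec (ybar + γ • Δy) i - b i) ^ 2 =
        ∑ i, (((A * V).mulVec ybar i - b i) ^ 2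
          + 2 * γ * (((A * V).mulVec ybar i - b i) * (A * V).mulVec Δy i)
          + γ ^ 2 * ((A * V).mulVec Δy i) ^ 2) := by
      refine Finset.sum_congr rfl fun i _ => ?_
      rw [hexp i]; ring
    rw [this]
    simp only [Finset.sum_add_distrib, ← Finset.mul_sum, hlast]
    ring
  have h1 : σ ^ 2 + γ ^ 2 * ∑ i, ((A * V).mulVec Δy i) ^ 2 ≤
      ∑ i, ((A * V).mulVec (ybar + γ • Δy) i - b i) ^ 2 := by
    rw [key]
    nlinarith [hres]
  refine ⟨h1, ?_⟩
  have h2 : σ ^ 2 ≤ ∑ i, ((A * V).mulVec (ybar + γ • Δy) i - b i) ^ 2 := by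
    nlinarith [Finset.sum_nonneg (fun i (_ : i ∈ Finset.univ) => sq_nonneg ((A * V).mulVec Δy i))]
  calc σ = Real.sqrt (σ ^ 2) := by rw [Real.sqrt_sq hσ.le]
    _ ≤ _ := Real.sqrt_le_sqrt h2
end
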